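/- Let N ≥ 1 be an integer and let M > 1, b > 0, ℓ > 1, K > 0 and w > 0 satisfy 2N(M−1)/b ≤ w ≤ ( 1 + (b²/4) (ℓ − 1 + ℓ/K)² )^{−1/2}. Then for every s > 0 and every ξ ∈ ℝ^N, the function ū(t,x) = b^{1/(1−M)} ( ℓ/s − 1/(s+wt) )^{1/(1−M)} ( 1 − |ξ − x|²/(s+wt)² )^{1/(M−1)} satisfies, at every point of the open set Q_{s,ξ} = { (t,x) ∈ (0, s/(wK)) × ℝ^N : |x − ξ| < s + wt }, the pointwise differential inequality ∂_t ū ≤ div_x ( ū ∇_x(ū^{M−1}) / √(1 + |∇_x(ū^{M−1})|²) ). -/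

import Mathlib

open RealInnerProductSpace

noncomputable section

/-- Classical divergence of a vector field on `ℝ^N`: the sum of the partial
derivatives of the components. -/
def divergence {N : ℕ} (V : EuclideanSpace ℝ (Fin N) → EuclideanSpace ℝ (Fin N))
    (x : EuclideanSpace ℝ (Fin N)) : ℝ :=
  ∑ i, ⟪fderiv ℝ V x (EuclideanSpace.single i 1), EuclideanSpace.single i 1⟫

/-- The flux `u ∇(u^{M−1}) / √(1 + |∇(u^{M−1})|²)` of the speed-limited porous medium
equation, as a spatial vector field at time `t`. -/
def fluxSL {N : ℕ} (M : ℝ) (u : ℝ → EuclideanSpace ℝ (Fin N) → ℝ) (t : ℝ)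
    (x : EuclideanSpace ℝ (Fin N)) : EuclideanSpace ℝ (Fin N) :=
  (u t x / Real.sqrt (1 + ‖gradient (fun y => u t y ^ (M-1)) x‖ ^ 2)) •
    gradient (fun y => u t y ^ (M-1)) x

/-- The translated/rescaled spherical-cap subsolution of STATEMENT 9. -/
def uSL {N : ℕ} (M b ℓ w s : ℝ) (ξ : EuclideanSpace ℝ (Fin N)) (t : ℝ)
    (x : EuclideanSpace ℝ (Fin N)) : ℝ :=
  b ^ (1/(1-M)) * (ℓ/s - 1/(s+w*t)) ^ (1/(1-M)) *
    (1 - ‖ξ - x‖ ^ 2 / (s+w*t) ^ 2) ^ (1/(M-1))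

/- ### Auxiliary lemmas -/

lemma hasFDerivAt_normSq {N : ℕ} (ξ x : EuclideanSpace ℝ (Fin N)) :
    HasFDerivAt (fun y : EuclideanSpace ℝ (Fin N) => ‖y - ξ‖ ^ 2)
      ((2:ℝ) • (innerSL ℝ (x - ξ))) x := by
  have h := ((hasFDerivAt_id x).sub_const ξ).inner ℝ ((hasFDerivAt_id x).sub_const ξ)
  simp only [id_eq] at h
  have heq : (fun y : EuclideanSpace ℝ (Fin N) => ⟪y - ξ, y - ξ⟫)
      = fun y => ‖y - ξ‖ ^ 2 := by
    funext y; exact real_inner_self_eq_norm_sq _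
  rw [heq] at h
  refine h.congr_fderiv (Eq.symm ?_)
  ext e
  simp [real_inner_comm]
  have h1 : ∑ j, (x j - ξ j) * e j = ∑ j, x j * e j - ∑ j, ξ j * e j := by
    rw [← Finset.sum_sub_distrib]; exact Finset.sum_congr rfl (fun j _ => by ring)
  have h2 : ∑ j, e j * (x j - ξ j) = ∑ j, x j * e j - ∑ j, ξ j * e j := by
    rw [← Finset.sum_sub_distrib]; exact Finset.sum_congr rfl (fun j _ => by ring)
  rw [← real_inner_comm e (x - ξ), inner_sub_left]; ring

lemma divergence_radial {N : ℕ} (ξ x : EuclideanSpace ℝ (Fin N)) {Ff : ℝ → ℝ} {F' : ℝ}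
    (hF : HasDerivAt Ff F' (‖x - ξ‖ ^ 2)) :
    divergence (fun y => Ff (‖y - ξ‖ ^ 2) • (y - ξ)) x
      = N * Ff (‖x - ξ‖ ^ 2) + 2 * ‖x - ξ‖ ^ 2 * F' := by
  have hq := hasFDerivAt_normSq ξ x
  have hc : HasFDerivAt (fun y : EuclideanSpace ℝ (Fin N) => Ff (‖y - ξ‖ ^ 2))
      (F' • ((2:ℝ) • (innerSL ℝ (x - ξ)))) x := hF.comp_hasFDerivAt x hq
  have hV := hc.smul ((hasFDerivAt_id x).sub_const ξ)
  simp only [id_eq] at hV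
  unfold divergence
  rw [(show HasFDerivAt (fun y => Ff (‖y - ξ‖ ^ 2) • (y - ξ)) _ x from hV).fderiv]
  have hterm : ∀ i : Fin N,
      ⟪(Ff (‖x - ξ‖ ^ 2) • ContinuousLinearMap.id ℝ (EuclideanSpace ℝ (Fin N)) +
        (F' • (2:ℝ) • (innerSL ℝ (x - ξ))).smulRight (x - ξ)) (EuclideanSpace.single i 1),
        EuclideanSpace.single i 1⟫ =
      Ff (‖x - ξ‖ ^ 2) + 2 * F' * ((x - ξ) i * (x - ξ) i) := by
    intro i
    simp [ContinuousLinearMap.smulRight_apply, inner_add_left, inner_smul_left,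
      real_inner_smul_left, EuclideanSpace.inner_single_right, EuclideanSpace.inner_single_left,
      innerSL_apply_apply, real_inner_self_eq_norm_sq]
    ring
  rw [Finset.sum_congr rfl (fun i _ => hterm i)]
  rw [Finset.sum_add_distrib]
  simp only [Finset.sum_const, Finset.card_univ, Fintype.card_fin, nsmul_eq_mul]
  have hsum : ∑ i : Fin N, (x - ξ) i * (x - ξ) i = ‖x - ξ‖ ^ 2 := by
    rw [← real_inner_self_eq_norm_sq]
    rfl
  rw [← Finset.mul_sum, hsum]
  ring

lemma timeDeriv (M b ℓ w s ρ t : ℝ) (hR : 0 < s + w*t)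
    (hc : 0 < ℓ/s - 1/(s+w*t)) (hg : 0 < 1 - ρ/(s+w*t)^2) :
    HasDerivAt (fun τ => b ^ (1/(1-M)) * (ℓ/s - 1/(s+w*τ)) ^ (1/(1-M)) *
        (1 - ρ/(s+w*τ)^2) ^ (1/(M-1)))
      (b ^ (1/(1-M)) * (w * (1/(1-M)) / (s+w*t)^2 * (ℓ/s - 1/(s+w*t)) ^ (1/(1-M)-1)) *
          (1 - ρ/(s+w*t)^2) ^ (1/(M-1))
        + b ^ (1/(1-M)) * (ℓ/s - 1/(s+w*t)) ^ (1/(1-M)) *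
          (2*ρ*w/(s+w*t)^3 * (1/(M-1)) * (1 - ρ/(s+w*t)^2) ^ (1/(M-1)-1))) t := by
  have hA : HasDerivAt (fun τ : ℝ => s + w*τ) w t := by
    simpa using ((hasDerivAt_id t).const_mul w).const_add s
  have h1 : HasDerivAt (fun τ : ℝ => 1/(s+w*τ)) (-w/(s+w*t)^2) t := by
    have := hA.inv hR.ne'
    simp only [one_div]
    exact this
  have hct : HasDerivAt (fun τ : ℝ => ℓ/s - 1/(s+w*τ)) (w/(s+w*t)^2) t := by
    have := h1.const_sub (ℓ/s)
    refine this.congr_deriv (Eq.symm ?_)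
    ring
  have hcp := hct.rpow_const (p := 1/(1-M)) (Or.inl hc.ne')
  have hsq : HasDerivAt (fun τ : ℝ => (s+w*τ)^2) (2*(s+w*t)*w) t := by
    have := hA.pow 2
    refine this.congr_deriv (Eq.symm ?_)
    simp
  have hdiv : HasDerivAt (fun τ : ℝ => ρ/(s+w*τ)^2) (-(2*ρ*w/(s+w*t)^3)) t := by
    have := (hasDerivAt_const t ρ).div hsq (by positivity)
    refine this.congr_deriv (Eq.symm ?_)
    field_simp
    ring
  have hgt : HasDerivAt (fun τ : ℝ => 1 - ρ/(s+w*τ)^2) (2*ρ*w/(s+w*t)^3) t := by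
    have := hdiv.const_sub 1
    refine this.congr_deriv (Eq.symm ?_)
    ring
  have hgp := hgt.rpow_const (p := 1/(M-1)) (Or.inl hg.ne')
  have := (hcp.const_mul (b ^ (1/(1-M)))).mul hgp
  refine this.congr_deriv (Eq.symm ?_)
  ring

lemma fluxDeriv (M Cb Cc κ R ρ : ℝ) (hR : 0 < R) (hg : 0 < 1 - ρ/R^2) (hκ : 0 < κ)
    (hρ : 0 ≤ ρ) :
    HasDerivAt (fun ρ' => Cb * Cc * (1 - ρ'/R^2) ^ (1/(M-1)) * (-κ) /
        Real.sqrt (1 + κ^2 * ρ'))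
      ((κ * (1/(M-1)) / R^2 * (Cb * Cc * (1-ρ/R^2)^(1/(M-1)-1)) * Real.sqrt (1+κ^2*ρ)
        + Cb*Cc*(1-ρ/R^2)^(1/(M-1)) * κ^3/(2*Real.sqrt (1+κ^2*ρ))) / Real.sqrt (1+κ^2*ρ)^2)
      ρ := by
  have hPpos : 0 < Real.sqrt (1+κ^2*ρ) := Real.sqrt_pos.mpr (by positivity)
  have hgt : HasDerivAt (fun ρ' : ℝ => 1 - ρ'/R^2) (-(1/R^2)) ρ := by
    simpa using ((hasDerivAt_id ρ).div_const (R^2)).const_sub 1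
  have hgp := hgt.rpow_const (p := 1/(M-1)) (Or.inl hg.ne')
  have hnum := (hgp.const_mul (Cb*Cc)).mul_const (-κ)
  have hlin : HasDerivAt (fun ρ' : ℝ => 1 + κ^2*ρ') (κ^2) ρ := by
    simpa using ((hasDerivAt_id ρ).const_mul (κ^2)).const_add 1
  have hden := hlin.sqrt (by positivity)
  have := hnum.div hden hPpos.ne'
  refine this.congr_deriv (Eq.symm ?_)
  field_simp
  ring

lemma uSL_pow {N : ℕ} (M b ℓ w s t : ℝ) (ξ y : EuclideanSpace ℝ (Fin N)) (hM : 1 < M)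
    (hb : 0 < b) (hc : 0 < ℓ/s - 1/(s+w*t)) (hg : 0 < 1 - ‖ξ - y‖^2/(s+w*t)^2) :
    uSL M b ℓ w s ξ t y ^ (M-1)
      = (1 - ‖ξ - y‖^2/(s+w*t)^2) / (b * (ℓ/s - 1/(s+w*t))) := by
  unfold uSL
  have hM1 : M - 1 ≠ 0 := by linarith
  have h1 : (0:ℝ) ≤ b ^ (1/(1-M)) := (Real.rpow_pos_of_pos hb _).le
  have h2 : (0:ℝ) ≤ (ℓ/s - 1/(s+w*t)) ^ (1/(1-M)) := (Real.rpow_pos_of_pos hc _).le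
  rw [Real.mul_rpow (mul_nonneg h1 h2) (Real.rpow_pos_of_pos hg _).le,
      Real.mul_rpow h1 h2,
      ← Real.rpow_mul hb.le, ← Real.rpow_mul hc.le, ← Real.rpow_mul hg.le]
  have e1 : 1/(1-M) * (M-1) = -1 := by
    rw [div_mul_eq_mul_div, div_eq_iff (by linarith : (1:ℝ)-M ≠ 0)]; ring
  have e2 : 1/(M-1) * (M-1) = 1 := one_div_mul_cancel hM1
  rw [e1, e2, Real.rpow_one, Real.rpow_neg_one, Real.rpow_neg_one]
  field_simp

lemma uSL_hasGradient {N : ℕ} (M b ℓ w s t : ℝ) (ξ y : EuclideanSpace ℝ (Fin N)) (hM : 1 < M)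
    (hb : 0 < b) (hR : 0 < s + w*t) (hc : 0 < ℓ/s - 1/(s+w*t)) (hy : ‖y - ξ‖ < s + w*t) :
    HasGradientAt (fun z => uSL M b ℓ w s ξ t z ^ (M-1))
      ((-(2/(b*(ℓ/s - 1/(s+w*t))*(s+w*t)^2))) • (y - ξ)) y := by
  set R := s + w*t with hRdef
  set c := ℓ/s - 1/R with hcdef
  have hc' : 0 < c := hc
  clear_value R c
  have hbc : b*c ≠ 0 := (mul_pos hb hc).ne'
  have hR0 : R ≠ 0 := hR.ne'
  have hψ : HasFDerivAt (fun z : EuclideanSpace ℝ (Fin N) => (b*c)⁻¹ - (b*c*R^2)⁻¹ * ‖z - ξ‖^2)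
      (-((b*c*R^2)⁻¹ • ((2:ℝ) • (innerSL ℝ (y - ξ))))) y :=
    ((hasFDerivAt_normSq ξ y).const_mul ((b*c*R^2)⁻¹)).const_sub ((b*c)⁻¹)
  have hev : (fun z => uSL M b ℓ w s ξ t z ^ (M-1)) =ᶠ[nhds y]
      (fun z : EuclideanSpace ℝ (Fin N) => (b*c)⁻¹ - (b*c*R^2)⁻¹ * ‖z - ξ‖^2) := by
    have hmem : Metric.ball ξ R ∈ nhds y := by
      apply Metric.isOpen_ball.mem_nhds
      rw [Metric.mem_ball, dist_eq_norm]
      exact hy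
    filter_upwards [hmem] with z hz
    rw [Metric.mem_ball, dist_eq_norm] at hz
    have hgz : 0 < 1 - ‖ξ - z‖^2/R^2 := by
      rw [norm_sub_rev]
      have h1 : ‖z - ξ‖^2 < R^2 := pow_lt_pow_left₀ hz (norm_nonneg _) (by norm_num)
      have hR2 : (0:ℝ) < R^2 := by positivity
      rw [sub_pos, div_lt_one hR2]
      exact h1
    rw [uSL_pow M b ℓ w s t ξ z hM hb (by rw [← hRdef, ← hcdef]; exact hc')
      (by rw [← hRdef]; exact hgz)]
    rw [← hRdef, ← hcdef, norm_sub_rev ξ z]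
    rw [eq_sub_iff_add_eq, div_add' _ _ _ hbc, div_eq_iff hbc]
    have hR2 : (R:ℝ)^2 ≠ 0 := pow_ne_zero 2 hR0
    field_simp
    ring
  have hFD := hψ.congr_of_eventuallyEq hev
  rw [hasGradientAt_iff_hasFDerivAt]
  refine hFD.congr_fderiv (Eq.symm ?_)
  ext e
  rw [InnerProductSpace.toDual_apply_apply]
  have h1 : ⟪(-(2/(b*c*R^2))) • (y - ξ), e⟫ = (-(2/(b*c*R^2))) * ⟪y - ξ, e⟫ :=
    real_inner_smul_left _ _ _
  rw [h1]
  simp only [ContinuousLinearMap.neg_apply, ContinuousLinearMap.smul_apply,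
    innerSL_apply_apply, smul_eq_mul]
  rw [div_eq_mul_inv]
  ring

lemma flux_eq {N : ℕ} (M b ℓ w s t : ℝ) (ξ y : EuclideanSpace ℝ (Fin N)) (hM : 1 < M)
    (hb : 0 < b) (hR : 0 < s + w*t) (hc : 0 < ℓ/s - 1/(s+w*t)) (hy : ‖y - ξ‖ < s + w*t) :
    fluxSL M (uSL M b ℓ w s ξ) t y
      = (b ^ (1/(1-M)) * (ℓ/s - 1/(s+w*t)) ^ (1/(1-M)) *
          (1 - ‖y - ξ‖^2/(s+w*t)^2) ^ (1/(M-1)) * (-(2/(b*(ℓ/s - 1/(s+w*t))*(s+w*t)^2))) /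
          Real.sqrt (1 + (2/(b*(ℓ/s - 1/(s+w*t))*(s+w*t)^2))^2 * ‖y - ξ‖^2)) • (y - ξ) := by
  set R := s + w*t with hRdef
  set c := ℓ/s - 1/R with hcdef
  set κ := 2/(b*c*R^2) with hκdef
  have hκ : 0 < κ := by
    rw [hκdef]; positivity
  have hgrad := (uSL_hasGradient M b ℓ w s t ξ y hM hb hR hc hy).gradient
  unfold fluxSL
  rw [hgrad]
  have hns : ‖(-κ) • (y - ξ)‖^2 = κ^2 * ‖y - ξ‖^2 := by
    rw [norm_smul]
    simp [abs_of_pos hκ, mul_pow]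
  rw [hns]
  have huval : uSL M b ℓ w s ξ t y
      = b ^ (1/(1-M)) * c ^ (1/(1-M)) * (1 - ‖y - ξ‖^2/R^2) ^ (1/(M-1)) := by
    unfold uSL
    rw [← hRdef, ← hcdef, norm_sub_rev ξ y]
  rw [huval, smul_smul]
  congr 1
  rw [div_mul_eq_mul_div]

lemma key_ineq (Nr α w c R ρ g κ P : ℝ) (hα : 0 < α) (hw : 0 < w) (hc : 0 < c)
    (hR : 0 < R) (hρ : 0 ≤ ρ) (hg : 0 < g) (hκ : 0 < κ) (hP : 1 ≤ P) (hN : 0 ≤ Nr)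
    (k1 : w*P ≤ κ*R) (k2 : Nr*κ*(c*R^2) ≤ α*w) :
    -(α*w)/(c*R^2) + 2*α*ρ*w/(g*R^3) ≤ -(Nr*κ)/P + 2*α*ρ*κ/(g*R^2*P) + ρ*κ^3/P^3 := by
  have hP0 : 0 < P := lt_of_lt_of_le one_pos hP
  have h1 : Nr*κ/P ≤ Nr*κ := div_le_self (by positivity) hP
  have h2 : Nr*κ ≤ α*w/(c*R^2) := by
    rw [le_div_iff₀ (by positivity)]
    exact k2
  have h3 : 2*α*ρ*w/(g*R^3) ≤ 2*α*ρ*κ/(g*R^2*P) := by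
    rw [div_le_div_iff₀ (by positivity) (by positivity)]
    nlinarith [mul_le_mul_of_nonneg_left k1 (show (0:ℝ) ≤ 2*α*ρ*g*R^2 by positivity)]
  have h4 : (0:ℝ) ≤ ρ*κ^3/P^3 := by positivity
  have h5 : -(Nr*κ)/P = -(Nr*κ/P) := by ring
  have h6 : -(α*w)/(c*R^2) = -(α*w/(c*R^2)) := by ring
  linarith

lemma final_ineq (Nr A B G c g R ρ κ P w α : ℝ)
    (hA : 0 < A) (hB : 0 < B) (hG : 0 < G) (hc : 0 < c) (hg : 0 < g) (hR : 0 < R)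
    (hρ : 0 ≤ ρ) (hκ : 0 < κ) (hP : 1 ≤ P) (hα : 0 < α) (hw : 0 < w) (hN : 0 ≤ Nr)
    (k1 : w*P ≤ κ*R) (k2 : Nr*κ*(c*R^2) ≤ α*w) :
    A * (w * (-α) / R^2 * (B/c)) * G + A * B * (2*ρ*w/R^3 * α * (G/g))
      ≤ Nr * (A * B * G * (-κ) / P)
        + 2*ρ*((κ * α / R^2 * (A * B * (G/g)) * P + A*B*G*κ^3/(2*P)) / P^2) := by
  have hP0 : 0 < P := lt_of_lt_of_le one_pos hP
  have key := key_ineq Nr α w c R ρ g κ P hα hw hc hR hρ hg hκ hP hN k1 k2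
  have eqL : A * (w * (-α) / R^2 * (B/c)) * G + A * B * (2*ρ*w/R^3 * α * (G/g))
      = (A*B*G) * (-(α*w)/(c*R^2) + 2*α*ρ*w/(g*R^3)) := by
    field_simp
  have eqR : Nr * (A * B * G * (-κ) / P)
        + 2*ρ*((κ * α / R^2 * (A * B * (G/g)) * P + A*B*G*κ^3/(2*P)) / P^2)
      = (A*B*G) * (-(Nr*κ)/P + 2*α*ρ*κ/(g*R^2*P) + ρ*κ^3/P^3) := by
    field_simp
    ring
  rw [eqL, eqR]
  exact mul_le_mul_of_nonneg_left key (by positivity)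

set_option maxHeartbeats 4000000 in
/-- under the parameter constraint
`2N(M−1)/b ≤ w ≤ (1 + (b²/4)(ℓ−1+ℓ/K)²)^{-1/2}`, for every `s > 0` and `ξ ∈ ℝ^N` the
function `ū(t,x) = b^{1/(1−M)} (ℓ/s − 1/(s+wt))^{1/(1−M)} (1 − |ξ−x|²/(s+wt)²)^{1/(M−1)}`
satisfies the pointwise inequality
`∂_t ū ≤ div_x ( ū ∇_x(ū^{M−1}) / √(1 + |∇_x(ū^{M−1})|²) )` at every point of
`Q_{s,ξ} = {(t,x) : 0 < t < s/(wK), |x − ξ| < s + wt}`. -/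
theorem stmt_9 (N : ℕ) (hN : 1 ≤ N) (M b ℓ K w : ℝ)
    (hM : 1 < M) (hb : 0 < b) (hℓ : 1 < ℓ) (hK : 0 < K)
    (hw1 : 2 * N * (M - 1) / b ≤ w)
    (hw2 : w ≤ (1 + b ^ 2 / 4 * (ℓ - 1 + ℓ / K) ^ 2) ^ (-(1:ℝ)/2)) :
    ∀ s : ℝ, 0 < s → ∀ ξ : EuclideanSpace ℝ (Fin N),
      ∀ (t : ℝ) (x : EuclideanSpace ℝ (Fin N)),
        0 < t → t < s / (w * K) → ‖x - ξ‖ < s + w * t →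
        deriv (fun τ => uSL M b ℓ w s ξ τ x) t ≤
          divergence (fluxSL M (uSL M b ℓ w s ξ) t) x := by
  intro s hs ξ t x ht ht2 hx
  have hM1 : (0:ℝ) < M - 1 := by linarith
  have hN1 : (1:ℝ) ≤ N := by exact_mod_cast hN
  have hN0 : (0:ℝ) ≤ N := by linarith
  have hw0 : 0 < w := by
    have h0 : (0:ℝ) < 2*N*(M-1)/b := by
      apply div_pos _ hb; nlinarith
    linarith
  have hwt : 0 < w*t := mul_pos hw0 ht
  have hR : 0 < s + w*t := by linarith
  have hℓ0 : (0:ℝ) < ℓ := lt_trans one_pos hℓ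
  have hc : 0 < ℓ/s - 1/(s+w*t) := by
    rw [sub_pos, div_lt_div_iff₀ hR hs]
    have h1 := mul_lt_mul_of_pos_right hℓ hs
    have h2 := mul_pos hℓ0 hwt
    linarith only [h1, h2]
  have hρR : ‖x - ξ‖^2 < (s+w*t)^2 := by
    apply pow_lt_pow_left₀ hx (norm_nonneg _)
    norm_num
  have hg : 0 < 1 - ‖x - ξ‖^2/(s+w*t)^2 := by
    rw [sub_pos, div_lt_one (by positivity)]
    exact hρR
  have hκ : 0 < 2/(b*(ℓ/s - 1/(s+w*t))*(s+w*t)^2) :=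
    div_pos two_pos (mul_pos (mul_pos hb hc) (pow_pos hR 2))
  have hρ0 : (0:ℝ) ≤ ‖x - ξ‖^2 := by positivity
  -- left-hand side
  have hnorm : ‖ξ - x‖ = ‖x - ξ‖ := norm_sub_rev _ _
  have hgξ : 0 < 1 - ‖ξ - x‖^2/(s+w*t)^2 := by rw [hnorm]; exact hg
  have hHD : HasDerivAt (fun τ => uSL M b ℓ w s ξ τ x)
      (b ^ (1/(1-M)) * (w * (1/(1-M)) / (s+w*t)^2 * (ℓ/s - 1/(s+w*t)) ^ (1/(1-M)-1)) *
          (1 - ‖ξ - x‖^2/(s+w*t)^2) ^ (1/(M-1))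
        + b ^ (1/(1-M)) * (ℓ/s - 1/(s+w*t)) ^ (1/(1-M)) *
          (2*‖ξ - x‖^2*w/(s+w*t)^3 * (1/(M-1)) * (1 - ‖ξ - x‖^2/(s+w*t)^2) ^ (1/(M-1)-1))) t :=
    timeDeriv M b ℓ w s (‖ξ - x‖^2) t hR hc hgξ
  rw [hHD.deriv, hnorm]
  -- right-hand side
  obtain ⟨Ff, hFfdef⟩ : ∃ Ff : ℝ → ℝ, Ff = fun ρ' =>
      b ^ (1/(1-M)) * (ℓ/s - 1/(s+w*t)) ^ (1/(1-M)) * (1 - ρ'/(s+w*t)^2) ^ (1/(M-1)) *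
        (-(2/(b*(ℓ/s - 1/(s+w*t))*(s+w*t)^2))) /
        Real.sqrt (1 + (2/(b*(ℓ/s - 1/(s+w*t))*(s+w*t)^2))^2 * ρ') := ⟨_, rfl⟩
  have hev : fluxSL M (uSL M b ℓ w s ξ) t =ᶠ[nhds x]
      (fun y => Ff (‖y - ξ‖^2) • (y - ξ)) := by
    have hmem : Metric.ball ξ (s+w*t) ∈ nhds x := by
      apply Metric.isOpen_ball.mem_nhds
      rw [Metric.mem_ball, dist_eq_norm]
      exact hx
    filter_upwards [hmem] with z hz
    rw [Metric.mem_ball, dist_eq_norm] at hz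
    rw [hFfdef]
    exact flux_eq M b ℓ w s t ξ z hM hb hR hc hz
  have hFf : HasDerivAt Ff
      ((2/(b*(ℓ/s - 1/(s+w*t))*(s+w*t)^2) * (1/(M-1)) / (s+w*t)^2 *
          (b ^ (1/(1-M)) * (ℓ/s - 1/(s+w*t)) ^ (1/(1-M)) *
            (1-‖x - ξ‖^2/(s+w*t)^2)^(1/(M-1)-1)) *
          Real.sqrt (1+(2/(b*(ℓ/s - 1/(s+w*t))*(s+w*t)^2))^2*‖x - ξ‖^2)
        + b ^ (1/(1-M)) * (ℓ/s - 1/(s+w*t)) ^ (1/(1-M)) *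
            (1-‖x - ξ‖^2/(s+w*t)^2)^(1/(M-1)) *
            (2/(b*(ℓ/s - 1/(s+w*t))*(s+w*t)^2))^3 /
            (2*Real.sqrt (1+(2/(b*(ℓ/s - 1/(s+w*t))*(s+w*t)^2))^2*‖x - ξ‖^2))) /
        Real.sqrt (1+(2/(b*(ℓ/s - 1/(s+w*t))*(s+w*t)^2))^2*‖x - ξ‖^2)^2)
      (‖x - ξ‖^2) := by
    rw [hFfdef]
    exact fluxDeriv M (b ^ (1/(1-M))) ((ℓ/s - 1/(s+w*t)) ^ (1/(1-M)))
      (2/(b*(ℓ/s - 1/(s+w*t))*(s+w*t)^2)) (s+w*t) (‖x - ξ‖^2) hR hg hκ hρ0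
  have hdiv_eq : divergence (fluxSL M (uSL M b ℓ w s ξ) t) x
      = divergence (fun y => Ff (‖y - ξ‖^2) • (y - ξ)) x := by
    unfold divergence
    rw [hev.fderiv_eq]
  rw [hdiv_eq, divergence_radial ξ x hFf, hFfdef]
  beta_reduce
  -- now a scalar inequality
  have hβ : (1:ℝ)/(1-M) = -(1/(M-1)) := by
    rw [show (1:ℝ)-M = -(M-1) by ring, div_neg]
  have hBc : (ℓ/s - 1/(s+w*t)) ^ ((1:ℝ)/(1-M)-1)
      = (ℓ/s - 1/(s+w*t)) ^ ((1:ℝ)/(1-M)) / (ℓ/s - 1/(s+w*t)) := by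
    rw [Real.rpow_sub hc, Real.rpow_one]
  have hGg : (1 - ‖x - ξ‖^2/(s+w*t)^2) ^ ((1:ℝ)/(M-1)-1)
      = (1 - ‖x - ξ‖^2/(s+w*t)^2) ^ ((1:ℝ)/(M-1)) / (1 - ‖x - ξ‖^2/(s+w*t)^2) := by
    rw [Real.rpow_sub hg, Real.rpow_one]
  rw [hBc, hGg, hβ]
  -- key facts
  have hP1 : 1 ≤ Real.sqrt (1+(2/(b*(ℓ/s - 1/(s+w*t))*(s+w*t)^2))^2*‖x - ξ‖^2) := by
    calc (1:ℝ) = Real.sqrt 1 := Real.sqrt_one.symm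
      _ ≤ _ := Real.sqrt_le_sqrt (le_add_of_nonneg_right (by positivity))
  have hα : 0 < (1:ℝ)/(M-1) := by positivity
  clear hev hFf hdiv_eq hFfdef Ff hHD hgξ
  -- abbreviations for the key facts
  set R := s + w*t with hRdef
  set c := ℓ/s - 1/R with hcdef
  set κ := 2/(b*c*R^2) with hκdef
  set ρ := ‖x - ξ‖^2 with hρdef
  set P := Real.sqrt (1+κ^2*ρ) with hPdef
  have hP2 : P^2 = 1 + κ^2*ρ := Real.sq_sqrt (by positivity)
  have s4 : κ*(b*c*R^2) = 2 := by
    rw [hκdef]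
    exact div_mul_cancel₀ 2 (mul_pos (mul_pos hb hc) (pow_pos hR 2)).ne'
  have hwtK : w*t*K < s := by
    have h := (lt_div_iff₀ (mul_pos hw0 hK)).mp ht2
    rw [show w*t*K = t*(w*K) by ring]
    exact h
  have s2 : c*R ≤ ℓ - 1 + ℓ/K := by
    have e : c*R = ℓ*R/s - 1 := by
      rw [hcdef]
      field_simp
    rw [e]
    have hRle : R ≤ s + s/K := by
      have h1 : w*t ≤ s/K := by
        rw [le_div_iff₀ hK]
        linarith only [hwtK]
      rw [hRdef]
      linarith only [h1]
    have e2 : ℓ*(s+s/K)/s = ℓ + ℓ/K := by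
      field_simp
    have h2 : ℓ*R/s ≤ ℓ + ℓ/K := by
      rw [← e2]
      apply (div_le_div_iff_of_pos_right hs).mpr
      exact mul_le_mul_of_nonneg_left hRle hℓ0.le
    linarith only [h2]
  have s3 : (b*c*R/2)^2 ≤ b^2/4*(ℓ-1+ℓ/K)^2 := by
    have hcR : 0 ≤ c*R := le_of_lt (mul_pos hc hR)
    have m := mul_le_mul_of_nonneg_left (mul_self_le_mul_self hcR s2) (sq_nonneg b)
    linarith only [m]
  have s1 : w^2*(1 + b^2/4*(ℓ-1+ℓ/K)^2) ≤ 1 := by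
    have hX0 : (0:ℝ) ≤ b^2/4*(ℓ-1+ℓ/K)^2 := by positivity
    have h1X : (0:ℝ) < 1 + b^2/4*(ℓ-1+ℓ/K)^2 := by linarith
    have hpow : ((1 + b^2/4*(ℓ-1+ℓ/K)^2)^(-(1:ℝ)/2))^2
        = (1 + b^2/4*(ℓ-1+ℓ/K)^2)⁻¹ := by
      rw [← Real.rpow_natCast ((1 + b^2/4*(ℓ-1+ℓ/K)^2)^(-(1:ℝ)/2)) 2,
          ← Real.rpow_mul h1X.le]
      norm_num
      exact Real.rpow_neg_one _
    have hw2sq : w^2 ≤ (1 + b^2/4*(ℓ-1+ℓ/K)^2)⁻¹ := by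
      calc w^2 ≤ ((1 + b^2/4*(ℓ-1+ℓ/K)^2)^(-(1:ℝ)/2))^2 :=
            pow_le_pow_left₀ hw0.le hw2 2
        _ = (1 + b^2/4*(ℓ-1+ℓ/K)^2)⁻¹ := hpow
    have := mul_le_mul_of_nonneg_right hw2sq h1X.le
    rwa [inv_mul_cancel₀ h1X.ne'] at this
  have key0 : (b*c*R/2)^2*(κ^2*R^2) = 1 := by
    have e : (b*c*R/2)^2*(κ^2*R^2) = (κ*(b*c*R^2))^2/4 := by ring
    rw [e, s4]; norm_num
  have s3' := mul_le_mul_of_nonneg_left s3 (sq_nonneg w)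
  have s1' : w^2*(1+(b*c*R/2)^2) ≤ 1 := by linarith only [s3', s1]
  have k1 : w*P ≤ κ*R := by
    have s6 : (w*P)^2 ≤ (κ*R)^2 := by
      have e1 : (w*P)^2 = w^2 + w^2*κ^2*ρ := by
        rw [mul_pow, hP2]; ring
      have e2 := mul_le_mul_of_nonneg_left hρR.le (sq_nonneg (w*κ))
      have h := mul_le_mul_of_nonneg_right s1' (show (0:ℝ) ≤ κ^2*R^2 by positivity)
      have expand : w^2*(1+(b*c*R/2)^2)*(κ^2*R^2)
          = w^2*(κ^2*R^2) + w^2*((b*c*R/2)^2*(κ^2*R^2)) := by ring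
      rw [expand, key0] at h
      have h2 : w^2 + w^2*(κ^2*R^2) ≤ κ^2*R^2 := by linarith only [h]
      linarith only [e1, e2, h2]
    have hwP : 0 ≤ w*P := mul_nonneg hw0.le (Real.sqrt_nonneg _)
    have h := Real.sqrt_le_sqrt s6
    rwa [Real.sqrt_sq hwP, Real.sqrt_sq (mul_pos hκ hR).le] at h
  have k2 : (N:ℝ)*κ*(c*R^2) ≤ (1/(M-1))*w := by
    have e : κ*(c*R^2) = 2/b := by
      rw [hκdef]
      rw [div_mul_eq_mul_div, div_eq_div_iff (by positivity : (0:ℝ) < b*c*R^2).ne' hb.ne']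
      ring
    rw [mul_assoc, e]
    rw [show (N:ℝ)*(2/b) = 2*N/b by ring, show (1/(M-1))*w = w/(M-1) by ring,
        div_le_div_iff₀ hb hM1]
    have h := (div_le_iff₀ hb).mp hw1
    linarith only [h]
  exact final_ineq N (b ^ (-(1/(M-1)):ℝ)) (c ^ (-(1/(M-1)):ℝ))
    ((1 - ρ/R^2) ^ ((1:ℝ)/(M-1))) c (1 - ρ/R^2) R ρ κ P w (1/(M-1))
    (Real.rpow_pos_of_pos hb _) (Real.rpow_pos_of_pos hc _)
    (Real.rpow_pos_of_pos hg _) hc hg hR hρ0 hκ hP1 hα hw0 hN0 k1 k2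

end
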